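/- Soundness of the bit-vector translation: let P be a normal logic program and Tr_BV(P) = Tr_CC(P) ∪ Tr_R(P) its translation into fixed-width bit-vector logic. If S is an answer set of P, then there is a model (M,τ) of Tr_BV(P) (where M is a set of propositional atoms and τ a valuation of the bit-vector constants) such that S = M ∩ Hb(P). -/

import Mathlib

/-- A rule `a ← b₁,...,bₙ, not c₁,...,not cₘ` of a normal logic program. -/
structure Rule (α : Type) where
  head : α
  pos : Finset α
  neg : Finset α
deriving DecidableEq

variable {α : Type}

/-- The Herbrand base `Hb(P)`: atoms occurring in the program `P`. -/
def Hb (P : Finset (Rule α)) : Set α :=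
  {a | ∃ r ∈ P, r.head = a ∨ a ∈ r.pos ∨ a ∈ r.neg}

/-- An interpretation `M` satisfies a rule `r` iff `B⁺(r) ⊆ M` and
`B⁻(r) ∩ M = ∅` imply `hd(r) ∈ M`. -/
def ruleSat (M : Set α) (r : Rule α) : Prop :=
  ((↑r.pos : Set α) ⊆ M ∧ ∀ c ∈ r.neg, c ∉ M) → r.head ∈ M

/-- `M` is a classical model of the program `P`. -/
def isModelOf (M : Set α) (P : Finset (Rule α)) : Prop :=
  ∀ r ∈ P, ruleSat M r

/-- A program is positive iff every rule has an empty negative body. -/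
def isPositive (P : Finset (Rule α)) : Prop := ∀ r ∈ P, r.neg = ∅

/-- `L` is the least classical model of `P` (among interpretations `⊆ Hb(P)`). -/
def isLeastModel (P : Finset (Rule α)) (L : Set α) : Prop :=
  L ⊆ Hb P ∧ isModelOf L P ∧ ∀ N : Set α, N ⊆ Hb P → isModelOf N P → L ⊆ N

open Classical in
/-- The Gelfond–Lifschitz reduct `P^M = { hd(r) ← B⁺(r) : r ∈ P, M ∩ B⁻(r) = ∅ }`. -/
noncomputable def reduct [DecidableEq α] (P : Finset (Rule α)) (M : Set α) :
    Finset (Rule α) :=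
  (P.filter fun r => ∀ c ∈ r.neg, c ∉ M).image
    fun r => { head := r.head, pos := r.pos, neg := ∅ }

/-- `M` is an answer set (stable model) of `P` iff `M = LM(P^M)`. -/
def isAnswerSet [DecidableEq α] (P : Finset (Rule α)) (M : Set α) : Prop :=
  M ⊆ Hb P ∧ isLeastModel (reduct P M) M

/-- Propositional atoms of the bit-vector translation `Tr_BV(P)`: the original
atoms of `P`, the body atoms `bd_r`, and the support atoms `ext_a`, `int_a`. -/
inductive XAtom (α : Type) : Type
  | orig : α → XAtom α
  | bd : Rule α → XAtom α
  | ext : α → XAtom α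
  | int : α → XAtom α

/-- Edge relation of the positive dependency graph `DG(P)`:
`depRel P b a` iff `b ≤ a`, i.e., some rule `r ∈ P` has `hd(r) = a` and
`b ∈ B⁺(r)`. -/
def depRel (P : Finset (Rule α)) (b a : α) : Prop :=
  ∃ r ∈ P, r.head = a ∧ b ∈ r.pos

/-- The strongly connected component of `a` in `DG(P)` (w.r.t. the reflexive
transitive closure `≤*` of `≤`). -/
def scc (P : Finset (Rule α)) (a : α) : Set α :=
  {b | Relation.ReflTransGen (depRel P) a b ∧ Relation.ReflTransGen (depRel P) b a}

/-- `a` lies in a non-trivial strongly connected component, `|SCC(a)| > 1`. -/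
noncomputable def nontrivialSCC (P : Finset (Rule α)) (a : α) : Prop :=
  1 < (scc P a).ncard

/-- The width `m = ⌈log₂(|SCC(a)|+1)⌉` of the bit vector `x_a`. -/
noncomputable def width (P : Finset (Rule α)) (a : α) : ℕ :=
  Nat.clog 2 ((scc P a).ncard + 1)

/-- `Def_P(a) = { r ∈ P : hd(r) = a }`. -/
def Def (P : Finset (Rule α)) (a : α) : Set (Rule α) :=
  {r | r ∈ P ∧ r.head = a}

/-- External defining rules: `r ∈ Def_P(a)` with `B⁺(r) ∩ SCC(a) = ∅`. -/
def EDef (P : Finset (Rule α)) (a : α) : Set (Rule α) :=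
  {r | r ∈ Def P a ∧ ∀ b ∈ r.pos, b ∉ scc P a}

/-- Internal defining rules: `r ∈ Def_P(a)` with `B⁺(r) ∩ SCC(a) ≠ ∅`. -/
def IDef (P : Finset (Rule α)) (a : α) : Set (Rule α) :=
  {r | r ∈ Def P a ∧ ∃ b ∈ r.pos, b ∈ scc P a}

/-- `I` satisfies the body of `r`, i.e., `⋀_{b ∈ B⁺(r)} b ∧ ⋀_{c ∈ B⁻(r)} ¬c`. -/
def satBody (I : Set (XAtom α)) (r : Rule α) : Prop :=
  (∀ b ∈ r.pos, XAtom.orig b ∈ I) ∧ (∀ c ∈ r.neg, XAtom.orig c ∉ I)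

/-- `I` is a model of Clark's completion part `Tr_CC(P)` of the translation,
with the usual case analysis: (1) if `Def_P(a) = ∅` include `¬a`; (2) if some
rule in `Def_P(a)` has an empty body include `a`; (3) if `Def_P(a) = {r}` with
a nonempty body include `a ↔ body(r)`; (4) otherwise include
`a ↔ ⋁_{r ∈ Def_P(a)} bd_r` together with `bd_r ↔ body(r)` for each
`r ∈ Def_P(a)`. -/
def satTrCC (P : Finset (Rule α)) (I : Set (XAtom α)) : Prop :=
  ∀ a ∈ Hb P,
    (Def P a = ∅ → XAtom.orig a ∉ I) ∧
    ((∃ r ∈ Def P a, r.pos = ∅ ∧ r.neg = ∅) → XAtom.orig a ∈ I) ∧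
    (∀ r : Rule α, Def P a = {r} → (r.pos ≠ ∅ ∨ r.neg ≠ ∅) →
      (XAtom.orig a ∈ I ↔ satBody I r)) ∧
    ((1 < (Def P a).ncard ∧ ∀ r ∈ Def P a, r.pos ≠ ∅ ∨ r.neg ≠ ∅) →
      ((XAtom.orig a ∈ I ↔ ∃ r ∈ Def P a, XAtom.bd r ∈ I) ∧
        ∀ r ∈ Def P a, (XAtom.bd r ∈ I ↔ satBody I r)))

/-- `(I,τ)` is a model of the (weak) ranking constraints `Tr_R(P)`: for every
atom `a` in a non-trivial SCC, the new atoms `bd_r` (for `r ∈ Def_P(a)`,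
introduced together with their defining formulas `bd_r ↔ body(r)`), `ext_a`
and `int_a` satisfy
`ext_a ↔ ⋁_{r ∈ EDef_P(a)} bd_r`,
`int_a ↔ ⋁_{r ∈ IDef_P(a)} (bd_r ∧ ⋀_{b ∈ B⁺(r) ∩ SCC(a)} x_b <_m x_a)`,
`a → ext_a ∨ int_a`, `¬ext_a ∨ ¬int_a`, and `ext_a → (x_a =_m 0)`. -/
def satTrR (P : Finset (Rule α)) (I : Set (XAtom α)) (τ : α → ℕ) : Prop :=
  ∀ a ∈ Hb P, nontrivialSCC P a →
    (∀ r ∈ Def P a, (XAtom.bd r ∈ I ↔ satBody I r)) ∧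
    (XAtom.ext a ∈ I ↔ ∃ r ∈ EDef P a, XAtom.bd r ∈ I) ∧
    (XAtom.int a ∈ I ↔
      ∃ r ∈ IDef P a, XAtom.bd r ∈ I ∧
        ∀ b ∈ r.pos, b ∈ scc P a → τ b < τ a) ∧
    (XAtom.orig a ∈ I → XAtom.ext a ∈ I ∨ XAtom.int a ∈ I) ∧
    (XAtom.ext a ∉ I ∨ XAtom.int a ∉ I) ∧
    (XAtom.ext a ∈ I → τ a = 0)

/-- `τ` is an admissible bit-vector valuation: each constant `x_a` (introduced
for atoms `a` of non-trivial SCCs) takes an `m`-bit value,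
`τ(x_a) ∈ {0,...,2^m − 1}` where `m = ⌈log₂(|SCC(a)|+1)⌉`. -/
def isBVValuation (P : Finset (Rule α)) (τ : α → ℕ) : Prop :=
  ∀ a ∈ Hb P, nontrivialSCC P a → τ a < 2 ^ width P a

section Aux

variable [DecidableEq α]

/-- Body of `r` is true w.r.t. `S`. -/
def bodyTrue (S : Set α) (r : Rule α) : Prop :=
  (↑r.pos : Set α) ⊆ S ∧ ∀ c ∈ r.neg, c ∉ S

lemma hb_finite (P : Finset (Rule α)) : (Hb P).Finite := by
  have hsub : Hb P ⊆ ⋃ r ∈ (P : Set (Rule α)), (({r.head} ∪ ↑r.pos ∪ ↑r.neg) : Set α) := by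
    rintro a ⟨r, hr, h⟩
    refine Set.mem_biUnion hr ?_
    simp only [Set.mem_union, Set.mem_singleton_iff, Finset.coe_insert, Finset.mem_coe]
    rcases h with h | h | h
    · exact Or.inl (Or.inl h.symm)
    · exact Or.inl (Or.inr h)
    · exact Or.inr h
  exact (Set.Finite.biUnion P.finite_toSet (fun r _ =>
    (((Set.finite_singleton r.head).union r.pos.finite_toSet).union r.neg.finite_toSet))).subset hsub

lemma mem_reduct {P : Finset (Rule α)} {S : Set α} {r' : Rule α} :
    r' ∈ reduct P S ↔ ∃ r ∈ P, (∀ c ∈ r.neg, c ∉ S) ∧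
      r' = { head := r.head, pos := r.pos, neg := (∅ : Finset α) } := by
  classical
  constructor
  · intro h
    simp only [reduct, Finset.mem_image, Finset.mem_filter] at h
    obtain ⟨r, ⟨hrP, hneg⟩, hEq⟩ := h
    exact ⟨r, hrP, hneg, hEq.symm⟩
  · rintro ⟨r, hrP, hneg, rfl⟩
    simp only [reduct, Finset.mem_image, Finset.mem_filter]
    exact ⟨r, ⟨hrP, hneg⟩, rfl⟩

lemma step_closed {P : Finset (Rule α)} {S : Set α} (hS : isAnswerSet P S)
    {r : Rule α} (hr : r ∈ P) (hneg : ∀ c ∈ r.neg, c ∉ S)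
    (hpos : (↑r.pos : Set α) ⊆ S) : r.head ∈ S := by
  have hmem : ({ head := r.head, pos := r.pos, neg := (∅ : Finset α) } : Rule α) ∈ reduct P S :=
    mem_reduct.2 ⟨r, hr, hneg, rfl⟩
  have := hS.2.2.1 _ hmem
  exact this ⟨hpos, by simp⟩

/-- Iterated immediate consequence operator of the reduct. -/
def Tn (P : Finset (Rule α)) (S : Set α) : ℕ → Set α
  | 0 => ∅
  | n+1 => {a | ∃ r ∈ P, r.head = a ∧ (↑r.pos : Set α) ⊆ Tn P S n ∧ ∀ c ∈ r.neg, c ∉ S}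

lemma Tn_succ_mono (P : Finset (Rule α)) (S : Set α) :
    ∀ n, Tn P S n ⊆ Tn P S (n+1) := by
  intro n
  induction n with
  | zero => intro a ha; exact absurd ha (Set.notMem_empty a)
  | succ n ih =>
    rintro a ⟨r, hrP, hhd, hpos, hneg⟩
    exact ⟨r, hrP, hhd, fun b hb => ih (hpos hb), hneg⟩

lemma Tn_mono (P : Finset (Rule α)) (S : Set α) {n m : ℕ} (h : n ≤ m) :
    Tn P S n ⊆ Tn P S m := by
  induction h with
  | refl => exact subset_rfl
  | step _ ih => exact ih.trans (Tn_succ_mono P S _)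

lemma Tn_sub_S {P : Finset (Rule α)} {S : Set α} (hS : isAnswerSet P S) :
    ∀ n, Tn P S n ⊆ S := by
  intro n
  induction n with
  | zero => intro a ha; exact absurd ha (Set.notMem_empty a)
  | succ n ih =>
    rintro a ⟨r, hrP, hhd, hpos, hneg⟩
    exact hhd ▸ step_closed hS hrP hneg (fun b hb => ih (hpos hb))

lemma Tn_sub_Hb (P : Finset (Rule α)) (S : Set α) :
    ∀ n, Tn P S n ⊆ Hb (reduct P S) := by
  intro n
  cases n with
  | zero => intro a ha; exact absurd ha (Set.notMem_empty a)
  | succ n =>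
    rintro a ⟨r, hrP, hhd, _, hneg⟩
    exact ⟨{ head := r.head, pos := r.pos, neg := ∅ }, mem_reduct.2 ⟨r, hrP, hneg, rfl⟩,
      Or.inl hhd⟩

lemma finset_sub_iUnion {f : ℕ → Set α} (hmono : ∀ {n m : ℕ}, n ≤ m → f n ⊆ f m)
    (t : Finset α) (h : (↑t : Set α) ⊆ ⋃ n, f n) : ∃ n, (↑t : Set α) ⊆ f n := by
  classical
  induction t using Finset.cons_induction with
  | empty => exact ⟨0, by simp⟩
  | cons a t ha ih =>
    obtain ⟨n, hn⟩ := ih (fun b hb => h (by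
      simp only [Finset.coe_cons, Set.mem_insert_iff]
      exact Or.inr hb))
    have haU : a ∈ ⋃ n, f n := h (by simp)
    obtain ⟨m, hm⟩ := Set.mem_iUnion.1 haU
    refine ⟨max n m, ?_⟩
    intro b hb
    simp only [Finset.coe_cons, Set.mem_insert_iff] at hb
    rcases hb with rfl | hb
    · exact hmono (le_max_right n m) hm
    · exact hmono (le_max_left n m) (hn hb)

lemma S_sub_U {P : Finset (Rule α)} {S : Set α} (hS : isAnswerSet P S) :
    S ⊆ ⋃ n, Tn P S n := by
  set U : Set α := ⋃ n, Tn P S n with hU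
  have hUHb : U ⊆ Hb (reduct P S) := by
    intro a ha
    obtain ⟨n, hn⟩ := Set.mem_iUnion.1 ha
    exact Tn_sub_Hb P S n hn
  have hUmodel : isModelOf U (reduct P S) := by
    intro r' hr'
    obtain ⟨r, hrP, hneg, rfl⟩ := mem_reduct.1 hr'
    rintro ⟨hpos, -⟩
    obtain ⟨n, hn⟩ := finset_sub_iUnion (fun h => Tn_mono P S h) r.pos hpos
    exact Set.mem_iUnion.2 ⟨n+1, ⟨r, hrP, rfl, hn, hneg⟩⟩
  exact hS.2.2.2 U hUHb hUmodel

/-- Rank: stage at which `a` is derived. -/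
noncomputable def rnk (P : Finset (Rule α)) (S : Set α) (a : α) : ℕ :=
  sInf {n | a ∈ Tn P S n}

lemma key_lemma {P : Finset (Rule α)} {S : Set α} (hS : isAnswerSet P S)
    {a : α} (ha : a ∈ S) :
    ∃ r ∈ P, r.head = a ∧ (∀ c ∈ r.neg, c ∉ S) ∧ (↑r.pos : Set α) ⊆ S ∧
      ∀ b ∈ r.pos, rnk P S b < rnk P S a := by
  have hne : {n | a ∈ Tn P S n}.Nonempty := by
    obtain ⟨n, hn⟩ := Set.mem_iUnion.1 (S_sub_U hS ha)
    exact ⟨n, hn⟩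
  have hmem : a ∈ Tn P S (rnk P S a) := Nat.sInf_mem hne
  rcases hn0 : rnk P S a with _ | m
  · rw [hn0] at hmem; exact absurd hmem (Set.notMem_empty a)
  · rw [hn0] at hmem
    obtain ⟨r, hrP, hhd, hpos, hneg⟩ := hmem
    refine ⟨r, hrP, hhd, hneg, fun b hb => Tn_sub_S hS m (hpos hb), ?_⟩
    intro b hb
    have : rnk P S b ≤ m := Nat.sInf_le (hpos hb)
    omega

lemma mem_iff_supported {P : Finset (Rule α)} {S : Set α} (hS : isAnswerSet P S)
    (a : α) : a ∈ S ↔ ∃ r ∈ Def P a, bodyTrue S r := by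
  constructor
  · intro ha
    obtain ⟨r, hrP, hhd, hneg, hpos, -⟩ := key_lemma hS ha
    exact ⟨r, ⟨hrP, hhd⟩, hpos, hneg⟩
  · rintro ⟨r, ⟨hrP, hhd⟩, hpos, hneg⟩
    exact hhd ▸ step_closed hS hrP hneg hpos

lemma scc_eq_of_mem {P : Finset (Rule α)} {a b : α} (hb : b ∈ scc P a) :
    scc P b = scc P a := by
  obtain ⟨hab, hba⟩ := hb
  ext c
  exact ⟨fun ⟨h1, h2⟩ => ⟨hab.trans h1, h2.trans hba⟩,
    fun ⟨h1, h2⟩ => ⟨hba.trans h1, h2.trans hab⟩⟩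

lemma scc_sub_Hb {P : Finset (Rule α)} {a : α} (ha : a ∈ Hb P) :
    scc P a ⊆ Hb P := by
  rintro b ⟨hab, -⟩
  induction hab with
  | refl => exact ha
  | tail _ e _ =>
    obtain ⟨r, hrP, hhd, -⟩ := e
    exact ⟨r, hrP, Or.inl hhd⟩

/-- The external support condition. -/
def extCond (P : Finset (Rule α)) (S : Set α) (a : α) : Prop :=
  ∃ r ∈ EDef P a, bodyTrue S r

/-- Rank within the SCC. -/
noncomputable def inRank (P : Finset (Rule α)) (S : Set α) (a : α) : ℕ :=
  {b | b ∈ scc P a ∧ b ∈ S ∧ rnk P S b < rnk P S a}.ncard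

open Classical in
/-- The valuation. -/
noncomputable def tauV (P : Finset (Rule α)) (S : Set α) (a : α) : ℕ :=
  if extCond P S a then 0 else inRank P S a

lemma tau_lt {P : Finset (Rule α)} {S : Set α} {a b : α}
    (hfin : (scc P a).Finite) (hb : b ∈ scc P a) (hbS : b ∈ S)
    (hr : rnk P S b < rnk P S a) : tauV P S b < inRank P S a := by
  have hscc : scc P b = scc P a := scc_eq_of_mem hb
  have hsub : {c | c ∈ scc P b ∧ c ∈ S ∧ rnk P S c < rnk P S b} ⊂
      {c | c ∈ scc P a ∧ c ∈ S ∧ rnk P S c < rnk P S a} := by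
    constructor
    · rintro c ⟨h1, h2, h3⟩
      exact ⟨hscc ▸ h1, h2, h3.trans hr⟩
    · intro hcon
      have hbmem : b ∈ {c | c ∈ scc P a ∧ c ∈ S ∧ rnk P S c < rnk P S a} := ⟨hb, hbS, hr⟩
      obtain ⟨-, -, h3⟩ := hcon hbmem
      exact absurd h3 (lt_irrefl _)
  have hafin : {c | c ∈ scc P a ∧ c ∈ S ∧ rnk P S c < rnk P S a}.Finite :=
    hfin.subset (fun c hc => hc.1)
  have hlt : inRank P S b < inRank P S a := Set.ncard_lt_ncard hsub hafin
  have : tauV P S b ≤ inRank P S b := by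
    unfold tauV; split
    · exact Nat.zero_le _
    · exact le_rfl
  omega

lemma satBody_iff {S : Set α} {M : Set (XAtom α)}
    (hM : ∀ a, XAtom.orig a ∈ M ↔ a ∈ S) (r : Rule α) :
    satBody M r ↔ bodyTrue S r := by
  unfold satBody bodyTrue
  constructor
  · rintro ⟨h1, h2⟩
    exact ⟨fun b hb => (hM b).1 (h1 b hb), fun c hc hcS => h2 c hc ((hM c).2 hcS)⟩
  · rintro ⟨h1, h2⟩
    exact ⟨fun b hb => (hM b).2 (h1 hb), fun c hc hcM => h2 c hc ((hM c).1 hcM)⟩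

end Aux

/-- Soundness of the bit-vector translation. If `S` is an
answer set of a normal program `P`, then there is a model `(M,τ)` of
`Tr_BV(P) = Tr_CC(P) ∪ Tr_R(P)` such that `S = M ∩ Hb(P)`. -/
theorem trBV_sound [DecidableEq α] (P : Finset (Rule α)) (S : Set α)
    (hS : isAnswerSet P S) :
    ∃ (M : Set (XAtom α)) (τ : α → ℕ),
      isBVValuation P τ ∧ satTrCC P M ∧ satTrR P M τ ∧
      S = {a | a ∈ Hb P ∧ XAtom.orig a ∈ M} := by
  classical
  let M : Set (XAtom α) := fun x => match x with
    | .orig a => a ∈ S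
    | .bd r => bodyTrue S r
    | .ext a => extCond P S a
    | .int a => ∃ r ∈ IDef P a, bodyTrue S r ∧
        ∀ b ∈ r.pos, b ∈ scc P a → tauV P S b < tauV P S a
  have hMorig : ∀ a : α, XAtom.orig a ∈ M ↔ a ∈ S := fun a => Iff.rfl
  have hMbd : ∀ r : Rule α, XAtom.bd r ∈ M ↔ bodyTrue S r := fun r => Iff.rfl
  refine ⟨M, tauV P S, ?_, ?_, ?_, ?_⟩
  · -- isBVValuation
    intro a haHb _
    have hfin : (scc P a).Finite := (hb_finite P).subset (scc_sub_Hb haHb)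
    have h1 : tauV P S a ≤ inRank P S a := by
      unfold tauV; split
      · exact Nat.zero_le _
      · exact le_rfl
    have h2 : inRank P S a ≤ (scc P a).ncard :=
      Set.ncard_le_ncard (fun c hc => hc.1) hfin
    have h3 : (scc P a).ncard + 1 ≤ 2 ^ width P a := Nat.le_pow_clog one_lt_two _
    omega
  · -- satTrCC
    intro a haHb
    refine ⟨?_, ?_, ?_, ?_⟩
    · intro hdef hmem
      obtain ⟨r, hrDef, -⟩ := (mem_iff_supported hS a).1 ((hMorig a).1 hmem)
      rw [hdef] at hrDef
      exact absurd hrDef (Set.notMem_empty r)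
    · rintro ⟨r, hrDef, hp, hn⟩
      refine (hMorig a).2 ((mem_iff_supported hS a).2 ⟨r, hrDef, ?_, ?_⟩)
      · rw [hp]; simp
      · rw [hn]; simp
    · intro r hsing _
      rw [hMorig a, satBody_iff hMorig, mem_iff_supported hS]
      constructor
      · rintro ⟨r', hr', hb⟩
        rw [hsing] at hr'
        rw [Set.mem_singleton_iff] at hr'
        exact hr' ▸ hb
      · intro hb
        exact ⟨r, by rw [hsing]; rfl, hb⟩
    · intro _
      refine ⟨?_, fun r _ => (satBody_iff hMorig r).symm.trans (hMbd r).symm⟩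
      rw [hMorig a, mem_iff_supported hS]
      constructor
      · rintro ⟨r, hr, hb⟩; exact ⟨r, hr, (hMbd r).2 hb⟩
      · rintro ⟨r, hr, hb⟩; exact ⟨r, hr, (hMbd r).1 hb⟩
  · -- satTrR
    intro a haHb _
    have hfin : (scc P a).Finite := (hb_finite P).subset (scc_sub_Hb haHb)
    refine ⟨fun r _ => (satBody_iff hMorig r).symm.trans (hMbd r).symm, Iff.rfl, Iff.rfl,
      ?_, ?_, ?_⟩
    · -- a → ext ∨ int
      intro hmem
      have haS : a ∈ S := (hMorig a).1 hmem
      obtain ⟨r, hrP, hhd, hneg, hpos, hranks⟩ := key_lemma hS haS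
      have hDef : r ∈ Def P a := ⟨hrP, hhd⟩
      by_cases hext : extCond P S a
      · exact Or.inl hext
      · by_cases hint : ∃ b ∈ r.pos, b ∈ scc P a
        · refine Or.inr ⟨r, ⟨hDef, hint⟩, ⟨hpos, hneg⟩, fun b hb hbscc => ?_⟩
          have hτa : tauV P S a = inRank P S a := by unfold tauV; exact if_neg hext
          rw [hτa]
          exact tau_lt hfin hbscc (hpos hb) (hranks b hb)
        · exact absurd ⟨r, ⟨hDef, fun b hb hbs => hint ⟨b, hb, hbs⟩⟩, hpos, hneg⟩ hext
    · -- ¬ext ∨ ¬int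
      by_cases hext : extCond P S a
      · refine Or.inr ?_
        rintro ⟨r, ⟨hDef, b, hbpos, hbscc⟩, hbody, hlt⟩
        have hτa : tauV P S a = 0 := by unfold tauV; exact if_pos hext
        have := hlt b hbpos hbscc
        rw [hτa] at this
        exact absurd this (Nat.not_lt_zero _)
      · exact Or.inl hext
    · intro hext
      show tauV P S a = 0
      unfold tauV
      exact if_pos hext
  · ext a
    simp only [Set.mem_setOf_eq]
    exact ⟨fun ha => ⟨hS.1 ha, (hMorig a).2 ha⟩, fun ⟨_, h⟩ => (hMorig a).1 h⟩
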